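/- arXiv:1208.5623 — 4 statements merged into one kernel-verified Lean document; each statement's English description precedes it below -/
import Mathlib

section
/- Let $G$ be a group and $x, y \in G$ with $[x, y, y, \ldots, y] = 1$ where $y^m$ appears $n$ times, i.e., $[x,_n y^m] = 1$ for some positive integers $n, m$. Then the subgroup $\langle x \rangle^{\langle y \rangle}$ (the smallest subgroup containing $x$ and normalized by $y$) is finitely generated. -/
/-- The commutator `[a,b] = a⁻¹ b⁻¹ a b`. -/
def pcomm {G : Type*} [Group G] (a b : G) : G := a⁻¹ * b⁻¹ * a * b

/-- The iterated Engel commutator `[g,ₙ a]`. -/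
def pengel {G : Type*} [Group G] (g a : G) : ℕ → G
  | 0 => g
  | n + 1 => pcomm (pengel g a n) a

/-- `a` is a left Engel element. -/
def IsLeftEngel {G : Type*} [Group G] (a : G) : Prop :=
  ∀ g : G, ∃ n : ℕ, 1 ≤ n ∧ pengel g a n = 1

lemma pengel_succ' {G : Type*} [Group G] (g a : G) (n : ℕ) :
    pengel g a (n + 1) = pengel (pcomm g a) a n := by
  induction n with
  | zero => rfl
  | succ k ih => rw [show k + 1 + 1 = (k + 1) + 1 from rfl, pengel, ih, pengel]

lemma pcomm_map {G : Type*} [Group G] (φ : G →* G) (a b : G) :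
    φ (pcomm a b) = pcomm (φ a) (φ b) := by simp [pcomm]

lemma pengel_map {G : Type*} [Group G] (φ : G →* G) (g a : G) (n : ℕ) :
    φ (pengel g a n) = pengel (φ g) (φ a) n := by
  induction n with
  | zero => rfl
  | succ k ih => rw [pengel, pcomm_map, ih, pengel]

lemma engel_core {G : Type*} [Group G] (z : G) (H : Subgroup G) :
    ∀ (n : ℕ) (x : G), pengel x z n = 1 →
      (∀ i : ℕ, i < n → (z ^ (i : ℤ))⁻¹ * x * z ^ (i : ℤ) ∈ H) →
      ∀ k : ℤ, (z ^ k)⁻¹ * x * z ^ k ∈ H := by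
  intro n
  induction n with
  | zero =>
    intro x h _ k
    simp only [pengel] at h
    simp only [h]
    simpa using one_mem H
  | succ n ih =>
    intro x h hx
    have h' : pengel (pcomm x z) z n = 1 := by rw [← pengel_succ']; exact h
    have hu : ∀ i : ℕ, i < n → (z ^ (i : ℤ))⁻¹ * (pcomm x z) * z ^ (i : ℤ) ∈ H := by
      intro i hi
      have e : (z ^ (i : ℤ))⁻¹ * (pcomm x z) * z ^ (i : ℤ)
          = ((z ^ (i : ℤ))⁻¹ * x * z ^ (i : ℤ))⁻¹ *
            ((z ^ ((i : ℤ) + 1))⁻¹ * x * z ^ ((i : ℤ) + 1)) := by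
        rw [zpow_add, zpow_one]
        simp [pcomm]
        group
      rw [e]
      have h2 := hx (i + 1) (by omega)
      push_cast at h2
      exact mul_mem (inv_mem (hx i (by omega))) h2
    have hu' := ih (pcomm x z) h' hu
    intro k
    induction k using Int.induction_on with
    | zero =>
      have := hx 0 (by omega)
      simpa using this
    | succ k ihk =>
      have e : (z ^ ((k : ℤ) + 1))⁻¹ * x * z ^ ((k : ℤ) + 1)
          = ((z ^ (k : ℤ))⁻¹ * x * z ^ (k : ℤ)) *
            ((z ^ (k : ℤ))⁻¹ * (pcomm x z) * z ^ (k : ℤ)) := by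
        rw [zpow_add, zpow_one]
        simp [pcomm]
        group
      rw [e]
      exact mul_mem ihk (hu' k)
    | pred k ihk =>
      have e : (z ^ (-(k : ℤ) - 1))⁻¹ * x * z ^ (-(k : ℤ) - 1)
          = ((z ^ (-(k : ℤ)))⁻¹ * x * z ^ (-(k : ℤ))) *
            ((z ^ (-(k : ℤ) - 1))⁻¹ * (pcomm x z) * z ^ (-(k : ℤ) - 1))⁻¹ := by
        simp [pcomm, sub_eq_add_neg, zpow_add]
        group
      rw [e]
      exact mul_mem ihk (inv_mem (hu' _))

theorem stmt_0 {G : Type*} [Group G] (x y : G) (n m : ℕ) (hn : 1 ≤ n) (hm : 1 ≤ m)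
    (h : pengel x (y ^ m) n = 1) :
    (Subgroup.closure {z : G | ∃ i : ℤ, z = (y ^ i)⁻¹ * x * y ^ i}).FG := by
  classical
  set T : Finset G :=
    (Finset.range (n * m)).image (fun j : ℕ => (y ^ (j : ℤ))⁻¹ * x * y ^ (j : ℤ)) with hT
  rw [Subgroup.fg_iff]
  refine ⟨↑T, ?_, T.finite_toSet⟩
  apply le_antisymm
  · apply Subgroup.closure_mono
    intro g hg
    simp only [hT, Finset.coe_image, Set.mem_image, Finset.mem_coe, Finset.mem_range] at hg
    obtain ⟨j, _, rfl⟩ := hg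
    exact ⟨(j : ℤ), rfl⟩
  · rw [Subgroup.closure_le]
    rintro g ⟨i, rfl⟩
    set r : ℤ := i % (m : ℤ) with hr
    set q : ℤ := i / (m : ℤ) with hq
    have hm0 : (0 : ℤ) < (m : ℤ) := by exact_mod_cast hm
    have hr0 : 0 ≤ r := Int.emod_nonneg i (by omega)
    have hrm : r < m := Int.emod_lt_of_pos i hm0
    have hiq : (m : ℤ) * q + r = i := Int.mul_ediv_add_emod i m
    set r' : ℕ := r.toNat with hr'
    have hrr' : (r' : ℤ) = r := Int.toNat_of_nonneg hr0
    -- conjugating homomorphism by (y^r)⁻¹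
    set φ : G →* G := (MulAut.conj ((y ^ r)⁻¹)).toMonoidHom with hφ
    have hφa : ∀ a : G, φ a = (y ^ r)⁻¹ * a * y ^ r := by
      intro a
      show (y ^ r)⁻¹ * a * ((y ^ r)⁻¹)⁻¹ = (y ^ r)⁻¹ * a * y ^ r
      rw [inv_inv]
    have hφy : φ (y ^ m) = y ^ m := by
      rw [hφa, ← zpow_natCast y m]
      group
    set x' : G := (y ^ r)⁻¹ * x * y ^ r with hx'
    have hex' : pengel x' (y ^ m) n = 1 := by
      rw [hx', ← hφa, ← hφy, ← pengel_map, h, map_one]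
    have key := engel_core (y ^ m) (Subgroup.closure (↑T : Set G)) n x' hex' ?_ q
    · have e : ((y ^ m) ^ q)⁻¹ * x' * (y ^ m) ^ q = (y ^ i)⁻¹ * x * y ^ i := by
        rw [hx', ← hiq, ← zpow_natCast y m, ← zpow_mul, zpow_add]
        group
      rw [← e]
      exact key
    · intro i' hi'
      have hj : (m * i' + r' : ℕ) < n * m := by
        have : r' < m := by omega
        calc m * i' + r' < m * i' + m := by omega
          _ = m * (i' + 1) := by ring
          _ ≤ m * n := Nat.mul_le_mul_left m (by omega)
          _ = n * m := Nat.mul_comm m n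
      have e : ((y ^ m) ^ (i' : ℤ))⁻¹ * x' * (y ^ m) ^ (i' : ℤ)
          = (y ^ ((m * i' + r' : ℕ) : ℤ))⁻¹ * x * y ^ ((m * i' + r' : ℕ) : ℤ) := by
        rw [hx', ← zpow_natCast y m, ← zpow_mul]
        push_cast [hrr']
        rw [zpow_add]
        group
      rw [e]
      apply Subgroup.subset_closure
      simp only [hT, Finset.coe_image, Set.mem_image, Finset.mem_coe, Finset.mem_range]
      exact ⟨m * i' + r', hj, rfl⟩
end

section
/- Let $G$ be a group, $y \in G$, and $H$ a finitely generated subgroup of $G$. If $y^m$ is a left Engel element of $G$ for some positive integer $m$, then the subgroup $H^{\langle y \rangle}$ generated by all conjugates of $H$ by powers of $y$ is finitely generated. -/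
namespace EngelAux

variable {G : Type*} [Group G]

lemma pengel_succ (g a : G) (n : ℕ) :
    pengel g a (n + 1) = (pengel g a n)⁻¹ * (a⁻¹ * pengel g a n * a) := by
  simp [pengel, pcomm, mul_assoc]

lemma conj_mem_closure (x : G) (T : Set G)
    (h : ∀ s ∈ T, x⁻¹ * s * x ∈ Subgroup.closure T) :
    ∀ z ∈ Subgroup.closure T, x⁻¹ * z * x ∈ Subgroup.closure T := by
  intro z hz
  induction hz using Subgroup.closure_induction with
  | mem s hs => exact h s hs
  | one => simpa using Subgroup.one_mem _
  | mul a b _ _ ha hb =>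
      have e : x⁻¹ * (a * b) * x = (x⁻¹ * a * x) * (x⁻¹ * b * x) := by group
      rw [e]; exact Subgroup.mul_mem _ ha hb
  | inv a _ ha =>
      have e : x⁻¹ * a⁻¹ * x = (x⁻¹ * a * x)⁻¹ := by group
      rw [e]; exact Subgroup.inv_mem _ ha

lemma zpow_conj_mem (x : G) (M : Subgroup G)
    (h1 : ∀ z ∈ M, x⁻¹ * z * x ∈ M) (h2 : ∀ z ∈ M, x * z * x⁻¹ ∈ M)
    (g : G) (hg : g ∈ M) : ∀ q : ℤ, (x ^ q)⁻¹ * g * x ^ q ∈ M := by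
  intro q
  induction q using Int.induction_on with
  | zero => simpa using hg
  | succ k ih =>
      have e : (x ^ ((k : ℤ) + 1))⁻¹ * g * x ^ ((k : ℤ) + 1)
          = x⁻¹ * ((x ^ (k : ℤ))⁻¹ * g * x ^ (k : ℤ)) * x := by
        rw [zpow_add_one]; group
      rw [e]; exact h1 _ ih
  | pred k ih =>
      have e : (x ^ (-(k : ℤ) - 1))⁻¹ * g * x ^ (-(k : ℤ) - 1)
          = x * ((x ^ (-(k : ℤ)))⁻¹ * g * x ^ (-(k : ℤ))) * x⁻¹ := by
        rw [zpow_sub_one]; group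
      rw [e]; exact h2 _ ih

lemma engel_closure_eq (x s : G) (n : ℕ) (hn : 1 ≤ n) (h : pengel s x n = 1) :
    Subgroup.closure {w : G | ∃ q : ℤ, w = (x ^ q)⁻¹ * s * x ^ q}
      = Subgroup.closure ((fun i => pengel s x i) '' Set.Iio n) := by
  set S : Set G := {w : G | ∃ q : ℤ, w = (x ^ q)⁻¹ * s * x ^ q} with hS
  set C : Set G := (fun i => pengel s x i) '' Set.Iio n with hC
  -- basic commutator relation: x⁻¹ c_i x = c_i * c_{i+1}
  have comm : ∀ i : ℕ, x⁻¹ * pengel s x i * x = pengel s x i * pengel s x (i + 1) := by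
    intro i; rw [pengel_succ]; group
  have cmem : ∀ i < n, pengel s x i ∈ C := fun i hi => ⟨i, hi, rfl⟩
  have cmem' : ∀ i ≤ n, pengel s x i ∈ Subgroup.closure C := by
    intro i hi
    rcases lt_or_eq_of_le hi with hi | hi
    · exact Subgroup.subset_closure (cmem i hi)
    · rw [hi, h]; exact Subgroup.one_mem _
  apply le_antisymm
  · -- conj by x stability of closure C
    have keyA : ∀ z ∈ Subgroup.closure C, x⁻¹ * z * x ∈ Subgroup.closure C := by
      apply conj_mem_closure
      rintro _ ⟨i, hi, rfl⟩
      rw [comm i]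
      exact Subgroup.mul_mem _ (Subgroup.subset_closure (cmem i hi)) (cmem' (i + 1) hi)
    have aux : ∀ j ≤ n, x * pengel s x (n - j) * x⁻¹ ∈ Subgroup.closure C := by
      intro j
      induction j with
      | zero => intro _; simp [h]
      | succ j ih =>
          intro hj
          have hj' : j ≤ n := Nat.le_of_succ_le hj
          have hidx : n - (j + 1) + 1 = n - j := by omega
          have e : x * pengel s x (n - (j + 1)) * x⁻¹
              = pengel s x (n - (j + 1)) * (x * pengel s x (n - (j + 1) + 1) * x⁻¹)⁻¹ := by
            have := comm (n - (j + 1))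
            have e2 : pengel s x (n - (j+1) + 1)
                = (pengel s x (n - (j+1)))⁻¹ * (x⁻¹ * pengel s x (n - (j+1)) * x) := by
              rw [pengel_succ]
            rw [e2]; group
          rw [e, hidx]
          exact Subgroup.mul_mem _
            (Subgroup.subset_closure (cmem _ (by omega)))
            (Subgroup.inv_mem _ (ih hj'))
    have keyB : ∀ z ∈ Subgroup.closure C, x * z * x⁻¹ ∈ Subgroup.closure C := by
      have := conj_mem_closure (G := G) x⁻¹ C ?_
      · simpa using this
      · rintro _ ⟨i, hi, rfl⟩
        have : x * pengel s x i * x⁻¹ ∈ Subgroup.closure C := by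
          have := aux (n - i) (by omega)
          rwa [Nat.sub_sub_self (le_of_lt hi)] at this
        simpa using this
    rw [Subgroup.closure_le]
    rintro _ ⟨q, rfl⟩
    exact zpow_conj_mem x _ keyA keyB s (cmem' 0 (by omega)) q
  · rw [Subgroup.closure_le]
    rintro _ ⟨i, hi, rfl⟩
    clear hi
    induction i with
    | zero =>
        exact Subgroup.subset_closure ⟨0, by simp [pengel]⟩
    | succ i ih =>
        show pengel s x (i + 1) ∈ Subgroup.closure S
        simp only at ih
        rw [pengel_succ]
        refine Subgroup.mul_mem _ (Subgroup.inv_mem _ ih) ?_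
        apply conj_mem_closure x S _ _ ih
        rintro _ ⟨q, rfl⟩
        refine Subgroup.subset_closure ⟨q + 1, ?_⟩
        rw [zpow_add_one]; group

end EngelAux

theorem stmt_1 {G : Type*} [Group G] (y : G) (H : Subgroup G) (hH : H.FG)
    (m : ℕ) (hm : 1 ≤ m) (hEngel : IsLeftEngel (y ^ m)) :
    (Subgroup.closure {z : G | ∃ h ∈ H, ∃ i : ℤ, z = (y ^ i)⁻¹ * h * y ^ i}).FG := by
  classical
  obtain ⟨S, hScl, hSfin⟩ := (Subgroup.fg_iff H).mp hH
  choose N hN1 hN2 using hEngel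
  set x : G := y ^ m with hx
  set I : Set (G × ℕ) := S ×ˢ Set.Iio m with hI
  have hIfin : I.Finite := hSfin.prod (Set.finite_Iio m)
  set cnj : G × ℕ → G := fun p => (y ^ p.2)⁻¹ * p.1 * y ^ p.2 with hcnj
  set A : G × ℕ → Set G := fun p => {w : G | ∃ q : ℤ, w = (x ^ q)⁻¹ * cnj p * x ^ q} with hA
  set C : G × ℕ → Set G :=
    fun p => (fun i => pengel (cnj p) x i) '' Set.Iio (N (cnj p)) with hCdef
  have hAC : ∀ p, Subgroup.closure (A p) = Subgroup.closure (C p) :=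
    fun p => EngelAux.engel_closure_eq x (cnj p) (N (cnj p)) (hN1 _) (hN2 _)
  have hmZ : (0 : ℤ) < (m : ℤ) := by exact_mod_cast hm
  have key : ∀ (g : G) (r : ℕ) (q : ℤ),
      (y ^ ((r : ℤ) + (m : ℤ) * q))⁻¹ * g * y ^ ((r : ℤ) + (m : ℤ) * q)
      = (x ^ q)⁻¹ * ((y ^ r)⁻¹ * g * y ^ r) * x ^ q := by
    intro g r q
    have e : (y : G) ^ ((r : ℤ) + (m : ℤ) * q) = y ^ r * x ^ q := by
      rw [zpow_add, zpow_mul, zpow_natCast, zpow_natCast]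
    rw [e]; group
  have claim1 : Subgroup.closure {z : G | ∃ h ∈ H, ∃ i : ℤ, z = (y ^ i)⁻¹ * h * y ^ i}
      = Subgroup.closure (⋃ p ∈ I, A p) := by
    apply le_antisymm <;> rw [Subgroup.closure_le]
    · rintro _ ⟨h, hh, i, rfl⟩
      set f : G →* G := (MulAut.conj (y ^ i)⁻¹).toMonoidHom with hf
      have hfh : (y ^ i)⁻¹ * h * y ^ i = f h := by
        rw [hf]
        simp only [MulEquiv.coe_toMonoidHom, MulAut.conj_apply, inv_inv]
      rw [hfh]
      have hmem : f h ∈ (Subgroup.closure (S : Set G)).map f := by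
        exact Subgroup.mem_map_of_mem f (by rw [hScl]; exact hh)
      rw [MonoidHom.map_closure] at hmem
      have hsub : f '' S ⊆ ↑(Subgroup.closure (⋃ p ∈ I, A p)) := by
        rintro _ ⟨g, hg, rfl⟩
        set r : ℕ := (i % (m : ℤ)).toNat with hr
        set q : ℤ := i / (m : ℤ) with hq
        have hrZ : (r : ℤ) = i % (m : ℤ) :=
          Int.toNat_of_nonneg (Int.emod_nonneg i (by omega))
        have hrm : r < m := by
          have := Int.emod_lt_of_pos i hmZ
          omega
        have hi : (r : ℤ) + (m : ℤ) * q = i := by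
          rw [hrZ, hq, add_comm]
          exact Int.mul_ediv_add_emod i m
        apply Subgroup.subset_closure
        refine Set.mem_biUnion (show (g, r) ∈ I from ⟨hg, hrm⟩) ?_
        refine ⟨q, ?_⟩
        have hfg : f g = (y ^ i)⁻¹ * g * y ^ i := by
          rw [hf]
          simp only [MulEquiv.coe_toMonoidHom, MulAut.conj_apply, inv_inv]
        rw [hfg, ← hi, key]
      exact (Subgroup.closure_le (Subgroup.closure (⋃ p ∈ I, A p)) |>.mpr hsub) hmem
    · intro z hz
      simp only [Set.mem_iUnion] at hz
      obtain ⟨⟨g, r⟩, ⟨hg, hrm⟩, q, rfl⟩ := hz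
      apply Subgroup.subset_closure
      refine ⟨g, by rw [← hScl]; exact Subgroup.subset_closure hg, (r : ℤ) + (m : ℤ) * q, ?_⟩
      rw [key]
  have claim2 : Subgroup.closure (⋃ p ∈ I, A p) = Subgroup.closure (⋃ p ∈ I, C p) := by
    rw [Set.biUnion_eq_iUnion, Set.biUnion_eq_iUnion, Subgroup.closure_iUnion,
      Subgroup.closure_iUnion]
    exact iSup_congr fun p => hAC p
  rw [Subgroup.fg_iff]
  refine ⟨⋃ p ∈ I, C p, (claim1.trans claim2).symm, ?_⟩
  exact hIfin.biUnion fun p _ => (Set.finite_Iio _).image _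
end

section
/- If $G$ is a group generated by two elements $x$ and $y$, then the commutator subgroup $G'$ equals the subgroup generated by all elements $([x,y])^{x^r y^s}$ for $r, s \in \mathbb{Z}$. -/
theorem stmt_2 {G : Type*} [Group G] (x y : G)
    (hgen : Subgroup.closure ({x, y} : Set G) = ⊤) :
    commutator G =
      Subgroup.closure {z : G | ∃ r s : ℤ,
        z = (x ^ r * y ^ s)⁻¹ * pcomm x y * (x ^ r * y ^ s)} := by
  set c : G := pcomm x y with hc
  set S : Set G := {z : G | ∃ r s : ℤ,
      z = (x ^ r * y ^ s)⁻¹ * pcomm x y * (x ^ r * y ^ s)} with hS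
  set H : Subgroup G := Subgroup.closure S with hH
  have hcS : c ∈ S := ⟨0, 0, by simp [hc]⟩
  have hcH : c ∈ H := Subgroup.subset_closure hcS
  -- conjugation by y and y⁻¹ preserves S
  have hSy : ∀ z ∈ S, y⁻¹ * z * y ∈ S := by
    rintro z ⟨r, s, rfl⟩
    refine ⟨r, s + 1, ?_⟩
    rw [zpow_add, zpow_one]
    group
  have hSy' : ∀ z ∈ S, y * z * y⁻¹ ∈ S := by
    rintro z ⟨r, s, rfl⟩
    refine ⟨r, s - 1, ?_⟩
    rw [zpow_sub, zpow_one]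
    group
  -- conjugation by y and y⁻¹ preserves H
  have Hy : ∀ h ∈ H, y⁻¹ * h * y ∈ H := by
    intro h hh
    induction hh using Subgroup.closure_induction with
    | mem z hz => exact Subgroup.subset_closure (hSy z hz)
    | one => simpa using one_mem H
    | mul a b _ _ ha hb =>
        have : y⁻¹ * (a * b) * y = (y⁻¹ * a * y) * (y⁻¹ * b * y) := by group
        rw [this]; exact mul_mem ha hb
    | inv a _ ha =>
        have : y⁻¹ * a⁻¹ * y = (y⁻¹ * a * y)⁻¹ := by group
        rw [this]; exact inv_mem ha
  have Hy' : ∀ h ∈ H, y * h * y⁻¹ ∈ H := by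
    intro h hh
    induction hh using Subgroup.closure_induction with
    | mem z hz => exact Subgroup.subset_closure (hSy' z hz)
    | one => simpa using one_mem H
    | mul a b _ _ ha hb =>
        have : y * (a * b) * y⁻¹ = (y * a * y⁻¹) * (y * b * y⁻¹) := by group
        rw [this]; exact mul_mem ha hb
    | inv a _ ha =>
        have : y * a⁻¹ * y⁻¹ = (y * a * y⁻¹)⁻¹ := by group
        rw [this]; exact inv_mem ha
  -- key: [y^t, b] ∈ H whenever [y, b] ∈ H
  have key : ∀ (b : G), y⁻¹ * b⁻¹ * y * b ∈ H → ∀ t : ℤ,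
      y ^ (-t) * b⁻¹ * y ^ t * b ∈ H := by
    intro b hb t
    induction t using Int.induction_on with
    | zero => simpa using one_mem H
    | succ n ih =>
        have heq : y ^ (-((n : ℤ) + 1)) * b⁻¹ * y ^ ((n : ℤ) + 1) * b =
            (y⁻¹ * (y ^ (-(n : ℤ)) * b⁻¹ * y ^ (n : ℤ) * b) * y) *
              (y⁻¹ * b⁻¹ * y * b) := by
          rw [zpow_add, zpow_one, neg_add, zpow_add, zpow_neg_one]
          group
        rw [heq]
        exact mul_mem (Hy _ ih) hb
    | pred n ih =>
        have heq : y ^ (-(-(n : ℤ) - 1)) * b⁻¹ * y ^ (-(n : ℤ) - 1) * b =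
            y * ((y ^ (-(-(n : ℤ))) * b⁻¹ * y ^ (-(n : ℤ)) * b) *
              (y⁻¹ * b⁻¹ * y * b)⁻¹) * y⁻¹ := by
          rw [zpow_sub, zpow_one, neg_sub, sub_neg_eq_add, zpow_add, zpow_one, neg_neg]
          group
        rw [heq]
        exact Hy' _ (mul_mem ih (inv_mem hb))
  -- [y, x] = c⁻¹ ∈ H
  have hyx : y⁻¹ * x⁻¹ * y * x ∈ H := by
    have : y⁻¹ * x⁻¹ * y * x = c⁻¹ := by rw [hc, pcomm]; group
    rw [this]; exact inv_mem hcH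
  -- [y, x⁻¹] ∈ H (it is x c x⁻¹ which lies in S with r = -1, s = 0)
  have hyxi : y⁻¹ * (x⁻¹)⁻¹ * y * x⁻¹ ∈ H := by
    refine Subgroup.subset_closure ⟨-1, 0, ?_⟩
    rw [pcomm, zpow_neg_one, zpow_zero]
    group
  have keyx : ∀ t : ℤ, y ^ (-t) * x⁻¹ * y ^ t * x ∈ H := key x hyx
  have keyxi : ∀ t : ℤ, y ^ (-t) * (x⁻¹)⁻¹ * y ^ t * x⁻¹ ∈ H := key x⁻¹ hyxi
  -- conjugation by x and x⁻¹ sends S into H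
  have hSx : ∀ z ∈ S, x⁻¹ * z * x ∈ H := by
    rintro z ⟨r, s, rfl⟩
    have hw := keyx s
    set w : G := y ^ (-s) * x⁻¹ * y ^ s * x with hwdef
    have heq : x⁻¹ * ((x ^ r * y ^ s)⁻¹ * pcomm x y * (x ^ r * y ^ s)) * x =
        w⁻¹ * ((x ^ (r + 1) * y ^ s)⁻¹ * pcomm x y * (x ^ (r + 1) * y ^ s)) * w := by
      rw [hwdef, pcomm, zpow_add, zpow_one, zpow_neg]
      group
    rw [heq]
    exact mul_mem (mul_mem (inv_mem hw)
      (Subgroup.subset_closure ⟨r + 1, s, rfl⟩)) hw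
  have hSx' : ∀ z ∈ S, x * z * x⁻¹ ∈ H := by
    rintro z ⟨r, s, rfl⟩
    have hw := keyxi s
    set w : G := y ^ (-s) * (x⁻¹)⁻¹ * y ^ s * x⁻¹ with hwdef
    have heq : x * ((x ^ r * y ^ s)⁻¹ * pcomm x y * (x ^ r * y ^ s)) * x⁻¹ =
        w⁻¹ * ((x ^ (r - 1) * y ^ s)⁻¹ * pcomm x y * (x ^ (r - 1) * y ^ s)) * w := by
      rw [hwdef, pcomm, zpow_sub, zpow_one, zpow_neg]
      group
    rw [heq]
    exact mul_mem (mul_mem (inv_mem hw)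
      (Subgroup.subset_closure ⟨r - 1, s, rfl⟩)) hw
  -- conjugation by x and x⁻¹ preserves H
  have Hx : ∀ h ∈ H, x⁻¹ * h * x ∈ H := by
    intro h hh
    induction hh using Subgroup.closure_induction with
    | mem z hz => exact hSx z hz
    | one => simpa using one_mem H
    | mul a b _ _ ha hb =>
        have : x⁻¹ * (a * b) * x = (x⁻¹ * a * x) * (x⁻¹ * b * x) := by group
        rw [this]; exact mul_mem ha hb
    | inv a _ ha =>
        have : x⁻¹ * a⁻¹ * x = (x⁻¹ * a * x)⁻¹ := by group
        rw [this]; exact inv_mem ha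
  have Hx' : ∀ h ∈ H, x * h * x⁻¹ ∈ H := by
    intro h hh
    induction hh using Subgroup.closure_induction with
    | mem z hz => exact hSx' z hz
    | one => simpa using one_mem H
    | mul a b _ _ ha hb =>
        have : x * (a * b) * x⁻¹ = (x * a * x⁻¹) * (x * b * x⁻¹) := by group
        rw [this]; exact mul_mem ha hb
    | inv a _ ha =>
        have : x * a⁻¹ * x⁻¹ = (x * a * x⁻¹)⁻¹ := by group
        rw [this]; exact inv_mem ha
  -- H is normal
  have hnorm : H.Normal := by
    rw [← Subgroup.normalizer_eq_top_iff, ← top_le_iff, ← hgen]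
    refine (Subgroup.closure_le _).2 ?_
    rintro g (rfl | rfl)
    · rw [SetLike.mem_coe, Subgroup.mem_normalizer_iff]
      intro h
      constructor
      · exact fun hh => Hx' h hh
      · intro hh
        have : h = g⁻¹ * (g * h * g⁻¹) * g := by group
        rw [this]; exact Hx _ hh
    · rw [SetLike.mem_coe, Subgroup.mem_normalizer_iff]
      intro h
      constructor
      · exact fun hh => Hy' h hh
      · intro hh
        have : h = g⁻¹ * (g * h * g⁻¹) * g := by group
        rw [this]; exact Hy _ hh
  haveI := hnorm
  -- the quotient G ⧸ H is commutative
  set f : G →* G ⧸ H := QuotientGroup.mk' H with hf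
  have hcq : f c = 1 := (QuotientGroup.eq_one_iff c).2 hcH
  have hxy : Commute (f x) (f y) := by
    have h0 : f c = (f x)⁻¹ * (f y)⁻¹ * f x * f y := by
      rw [hc, pcomm]; simp [map_mul]
    rw [h0] at hcq
    have h1 : f x * f y = f y * f x * ((f x)⁻¹ * (f y)⁻¹ * f x * f y) := by group
    rw [hcq, mul_one] at h1
    exact h1
  have hgenQ : Subgroup.closure ({f x, f y} : Set (G ⧸ H)) = ⊤ := by
    rw [← Set.image_pair, ← MonoidHom.map_closure, hgen]
    exact Subgroup.map_top_of_surjective f (QuotientGroup.mk'_surjective H)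
  have hxall : ∀ b : G ⧸ H, Commute (f x) b := by
    intro b
    have hb : b ∈ Subgroup.closure ({f x, f y} : Set (G ⧸ H)) := by
      rw [hgenQ]; exact Subgroup.mem_top b
    induction hb using Subgroup.closure_induction with
    | mem z hz => rcases hz with rfl | rfl; exacts [Commute.refl _, hxy]
    | one => exact Commute.one_right _
    | mul a b _ _ ha hb => exact Commute.mul_right ha hb
    | inv a _ ha => exact Commute.inv_right ha
  have hyall : ∀ b : G ⧸ H, Commute (f y) b := by
    intro b
    have hb : b ∈ Subgroup.closure ({f x, f y} : Set (G ⧸ H)) := by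
      rw [hgenQ]; exact Subgroup.mem_top b
    induction hb using Subgroup.closure_induction with
    | mem z hz => rcases hz with rfl | rfl; exacts [hxy.symm, Commute.refl _]
    | one => exact Commute.one_right _
    | mul a b _ _ ha hb => exact Commute.mul_right ha hb
    | inv a _ ha => exact Commute.inv_right ha
  have hall : ∀ a b : G ⧸ H, Commute a b := by
    intro a b
    have ha : a ∈ Subgroup.closure ({f x, f y} : Set (G ⧸ H)) := by
      rw [hgenQ]; exact Subgroup.mem_top a
    induction ha using Subgroup.closure_induction with
    | mem z hz => rcases hz with rfl | rfl; exacts [hxall b, hyall b]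
    | one => exact Commute.one_left _
    | mul a b _ _ ha hb => exact Commute.mul_left ha hb
    | inv a _ ha => exact Commute.inv_left ha
  -- conclude
  apply le_antisymm
  · rw [commutator_def, Subgroup.commutator_le]
    intro g₁ _ g₂ _
    open commutatorElement in
    have : f ⁅g₁, g₂⁆ = 1 := by
      rw [map_commutatorElement]
      exact (hall (f g₁) (f g₂)).commutator_eq
    exact (QuotientGroup.eq_one_iff _).1 this
  · refine (Subgroup.closure_le _).2 ?_
    rintro z ⟨r, s, rfl⟩
    have hcmem : pcomm x y ∈ commutator G := by
      open commutatorElement in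
      have : pcomm x y = ⁅x⁻¹, y⁻¹⁆ := by
        rw [pcomm, commutatorElement_def]; group
      rw [this, commutator_def]
      exact Subgroup.commutator_mem_commutator (Subgroup.mem_top _) (Subgroup.mem_top _)
    have := Subgroup.Normal.conj_mem inferInstance _ hcmem (x ^ r * y ^ s)⁻¹
    rwa [inv_inv] at this
end

section
/- Let $G$ be a group generated by a set of left Engel elements, let $x$ be a left Engel element of $G$, and let $H$ be a locally soluble normal subgroup of $G$. Then the subgroup $\langle H, x \rangle$ is locally soluble. -/
section Aux

variable {G : Type*} [Group G]

lemma pengel_succ_eq (g x : G) (k : ℕ) :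
    pengel g x (k + 1) = (pengel g x k)⁻¹ * (x⁻¹ * pengel g x k * x) := by
  show pcomm (pengel g x k) x = _
  unfold pcomm; group

lemma conj_pengel (g x : G) (k : ℕ) :
    x⁻¹ * pengel g x k * x = pengel g x k * pengel g x (k + 1) := by
  rw [pengel_succ_eq]; group

lemma pengel_mem {H : Subgroup G} (hH : H.Normal) {g : G} (hg : g ∈ H) (x : G) :
    ∀ k, pengel g x k ∈ H
  | 0 => hg
  | k + 1 => by
    have hc := pengel_mem hH hg x k
    have h2 : x⁻¹ * pengel g x k * x ∈ H := by
      simpa using hH.conj_mem _ hc x⁻¹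
    rw [pengel_succ_eq]
    exact mul_mem (inv_mem hc) h2

/-- Iterated commutator subgroup (derived series of a subgroup, inside the ambient group). -/
def dit (K : Subgroup G) : ℕ → Subgroup G
  | 0 => K
  | n + 1 => ⁅dit K n, dit K n⁆

lemma dit_mono {K L : Subgroup G} (h : K ≤ L) : ∀ n, dit K n ≤ dit L n
  | 0 => h
  | n + 1 => Subgroup.commutator_mono (dit_mono h n) (dit_mono h n)

lemma dit_map {G' : Type*} [Group G'] (f : G →* G') (K : Subgroup G) :
    ∀ n, (dit K n).map f = dit (K.map f) n
  | 0 => rfl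
  | n + 1 => by
    show ((⁅dit K n, dit K n⁆ : Subgroup G)).map f = ⁅dit (K.map f) n, dit (K.map f) n⁆
    rw [Subgroup.map_commutator, dit_map f K n]

lemma derivedSeries_map_subtype (K : Subgroup G) :
    ∀ n, (derivedSeries K n).map K.subtype = dit K n
  | 0 => by
    rw [derivedSeries_zero, ← MonoidHom.range_eq_map, Subgroup.range_subtype]
    rfl
  | n + 1 => by
    rw [derivedSeries_succ, Subgroup.map_commutator, derivedSeries_map_subtype K n]
    rfl

lemma isSolvable_iff_dit (K : Subgroup G) : IsSolvable K ↔ ∃ n, dit K n = ⊥ := by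
  constructor
  · rintro ⟨⟨n, hn⟩⟩
    exact ⟨n, by rw [← derivedSeries_map_subtype, hn, Subgroup.map_bot]⟩
  · rintro ⟨n, hn⟩
    refine ⟨⟨n, ?_⟩⟩
    have h1 : (derivedSeries K n).map K.subtype = ⊥ := by
      rw [derivedSeries_map_subtype, hn]
    have h2 := (Subgroup.map_eq_bot_iff _).mp h1
    rwa [Subgroup.ker_subtype, le_bot_iff] at h2

open scoped commutatorElement in
lemma commutator_iSup_le {A : ℕ → Subgroup G} (hA : Monotone A) :
    ⁅⨆ j, A j, ⨆ j, A j⁆ ≤ ⨆ j, ⁅A j, A j⁆ := by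
  rw [Subgroup.commutator_le]
  intro g₁ h₁ g₂ h₂
  rw [Subgroup.mem_iSup_of_directed hA.directed_le] at h₁ h₂
  obtain ⟨i, hi⟩ := h₁
  obtain ⟨j, hj⟩ := h₂
  have hmem : ⁅g₁, g₂⁆ ∈ ⁅A (max i j), A (max i j)⁆ :=
    Subgroup.commutator_mem_commutator (hA (le_max_left i j) hi) (hA (le_max_right i j) hj)
  exact le_iSup (fun j => ⁅A j, A j⁆) (max i j) hmem

lemma dit_iSup_le {A : ℕ → Subgroup G} (hA : Monotone A) :
    ∀ n, dit (⨆ j, A j) n ≤ ⨆ j, dit (A j) n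
  | 0 => le_rfl
  | n + 1 => by
    have h1 : dit (⨆ j, A j) (n + 1) ≤ ⁅⨆ j, dit (A j) n, ⨆ j, dit (A j) n⁆ :=
      Subgroup.commutator_mono (dit_iSup_le hA n) (dit_iSup_le hA n)
    exact h1.trans (commutator_iSup_le (fun i j hij => dit_mono (hA hij) n))

end Aux

open scoped Pointwise in
theorem stmt_6 {G : Type*} [Group G] (S : Set G) (hS : ∀ a ∈ S, IsLeftEngel a)
    (hgen : Subgroup.closure S = ⊤) (x : G) (hx : IsLeftEngel x)
    (H : Subgroup G) (hHnormal : H.Normal)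
    (hHls : ∀ K : Subgroup G, K ≤ H → K.FG → IsSolvable K) :
    ∀ K : Subgroup G, K ≤ H ⊔ Subgroup.closure {x} → K.FG → IsSolvable K := by
  haveI := hHnormal
  intro K hK hKfg
  obtain ⟨T, hT⟩ := hKfg
  -- decompose generators
  have hdec : ∀ s : G, ∃ h : G, h ∈ H ∧ (s ∈ (T : Set G) → ∃ t : ℤ, s = h * x ^ t) := by
    intro s
    by_cases hs : s ∈ (T : Set G)
    · have hmem : s ∈ H ⊔ Subgroup.closure {x} := hK (hT ▸ Subgroup.subset_closure hs)
      have hmem2 : s ∈ ((H : Set G) * ((Subgroup.closure {x} : Subgroup G) : Set G)) := by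
        rw [← Subgroup.normal_mul]; exact hmem
      obtain ⟨h, hh, c, hc, rfl⟩ := hmem2
      obtain ⟨t, rfl⟩ := Subgroup.mem_closure_singleton.mp hc
      exact ⟨h, hh, fun _ => ⟨t, rfl⟩⟩
    · exact ⟨1, one_mem H, fun h => absurd h hs⟩
  choose hf hfH hfdec using hdec
  choose nf hnf1 hnfeng using fun s => hx (hf s)
  -- the finitely generated "seed" subgroup A
  set B : Set G := ⋃ s ∈ (T : Set G), (fun k => pengel (hf s) x k) '' Set.Iio (nf s) with hB
  have hBfin : B.Finite := T.finite_toSet.biUnion fun s _ => (Set.finite_Iio _).image _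
  set A : Subgroup G := Subgroup.closure B with hA
  have hAfg : A.FG := (Subgroup.fg_iff _).mpr ⟨B, rfl, hBfin⟩
  have hAH : A ≤ H := by
    rw [hA, Subgroup.closure_le]
    rintro b hb
    simp only [hB, Set.mem_iUnion, Set.mem_image, Set.mem_Iio] at hb
    obtain ⟨s, hsT, k, hk, rfl⟩ := hb
    exact pengel_mem hHnormal (hfH s) x k
  have hfA : ∀ s ∈ (T : Set G), hf s ∈ A := by
    intro s hs
    apply Subgroup.subset_closure
    simp only [hB, Set.mem_iUnion, Set.mem_image, Set.mem_Iio]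
    exact ⟨s, hs, 0, lt_of_lt_of_le zero_lt_one (hnf1 s), rfl⟩
  -- A is stable under conjugation by x⁻¹·(-)·x
  have hstep : ∀ g ∈ A, x⁻¹ * g * x ∈ A := by
    intro g hg
    induction hg using Subgroup.closure_induction with
    | mem b hb =>
      simp only [hB, Set.mem_iUnion, Set.mem_image, Set.mem_Iio] at hb
      obtain ⟨s, hsT, k, hk, rfl⟩ := hb
      rw [conj_pengel]
      apply mul_mem
      · apply Subgroup.subset_closure
        simp only [hB, Set.mem_iUnion, Set.mem_image, Set.mem_Iio]
        exact ⟨s, hsT, k, hk, rfl⟩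
      · rcases lt_or_eq_of_le (Nat.succ_le_of_lt hk) with hlt | heq
        · apply Subgroup.subset_closure
          simp only [hB, Set.mem_iUnion, Set.mem_image, Set.mem_Iio]
          exact ⟨s, hsT, k + 1, hlt, rfl⟩
        · rw [show k + 1 = nf s from heq, hnfeng s]; exact one_mem A
    | one => simpa using one_mem A
    | mul g h hg hh ihg ihh =>
      have hcalc : x⁻¹ * (g * h) * x = (x⁻¹ * g * x) * (x⁻¹ * h * x) := by group
      rw [hcalc]; exact mul_mem ihg ihh
    | inv g hg ih =>
      have hcalc : x⁻¹ * g⁻¹ * x = (x⁻¹ * g * x)⁻¹ := by group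
      rw [hcalc]; exact inv_mem ih
  -- the ascending chain of conjugates
  set Aj : ℕ → Subgroup G := fun j => A.map (MulAut.conj (x ^ j)).toMonoidHom with hAj
  have hAup : ∀ j, Aj j ≤ Aj (j + 1) := by
    intro j g hg
    obtain ⟨a, ha, rfl⟩ := Subgroup.mem_map.mp hg
    refine Subgroup.mem_map.mpr ⟨x⁻¹ * a * x, hstep a ha, ?_⟩
    simp only [MulEquiv.coe_toMonoidHom, MulAut.conj_apply]
    rw [pow_succ]; group
  have hAmono : Monotone Aj := monotone_nat_of_le_succ hAup
  set P : Subgroup G := ⨆ j, Aj j with hP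
  have hAP : ∀ j, Aj j ≤ P := fun j => le_iSup Aj j
  have hA0 : A ≤ P := by
    intro a ha
    refine hAP 0 (Subgroup.mem_map.mpr ⟨a, ha, ?_⟩)
    simp [MulAut.conj_apply]
  have hPH : P ≤ H := by
    refine iSup_le fun j => ?_
    intro g hg
    obtain ⟨a, ha, rfl⟩ := Subgroup.mem_map.mp hg
    have hc := hHnormal.conj_mem a (hAH ha) (x ^ j)
    simpa only [MulEquiv.coe_toMonoidHom, MulAut.conj_apply] using hc
  -- P is solvable
  obtain ⟨d, hd⟩ := (isSolvable_iff_dit A).mp (hHls A hAH hAfg)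
  have hditAj : ∀ j, dit (Aj j) d = ⊥ := by
    intro j
    rw [hAj]
    show dit (A.map (MulAut.conj (x ^ j)).toMonoidHom) d = ⊥
    rw [← dit_map, hd, Subgroup.map_bot]
  have hPd : dit P d = ⊥ :=
    le_bot_iff.mp ((dit_iSup_le hAmono d).trans (iSup_le fun j => (hditAj j).le))
  haveI hPsolv : Group.IsSolvable P := (isSolvable_iff_dit P).mpr ⟨d, hPd⟩
  -- x normalizes P
  have hup' : ∀ g ∈ P, x * g * x⁻¹ ∈ P := by
    intro g hg
    rw [hP, Subgroup.mem_iSup_of_directed hAmono.directed_le] at hg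
    obtain ⟨j, hj⟩ := hg
    obtain ⟨a, ha, rfl⟩ := Subgroup.mem_map.mp hj
    refine hAP (j + 1) (Subgroup.mem_map.mpr ⟨a, ha, ?_⟩)
    simp only [MulEquiv.coe_toMonoidHom, MulAut.conj_apply]
    rw [pow_succ']; group
  have hdown : ∀ g ∈ P, x⁻¹ * g * x ∈ P := by
    intro g hg
    rw [hP, Subgroup.mem_iSup_of_directed hAmono.directed_le] at hg
    obtain ⟨j, hj⟩ := hg
    obtain ⟨a, ha, rfl⟩ := Subgroup.mem_map.mp hj
    cases j with
    | zero =>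
      have heq : (MulAut.conj (x ^ 0)).toMonoidHom a = a := by
        simp [MulAut.conj_apply]
      rw [heq]
      exact hA0 (hstep a ha)
    | succ j =>
      refine hAP j (Subgroup.mem_map.mpr ⟨a, ha, ?_⟩)
      simp only [MulEquiv.coe_toMonoidHom, MulAut.conj_apply]
      rw [pow_succ']; group
  have hxnorm : x ∈ Subgroup.normalizer (P : Set G) := by
    rw [Subgroup.mem_normalizer_iff]
    intro g
    constructor
    · exact fun hg => hup' g hg
    · intro hg
      have h2 := hdown _ hg
      have hcalc : x⁻¹ * (x * g * x⁻¹) * x = g := by group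
      rwa [hcalc] at h2
  -- the subgroup M = P ⊔ ⟨x⟩
  set M : Subgroup G := P ⊔ Subgroup.closure {x} with hM
  have hxM : x ∈ M := Subgroup.mem_sup_right (Subgroup.subset_closure (Set.mem_singleton x))
  have hPM : P ≤ M := le_sup_left
  have hKM : K ≤ M := by
    rw [← hT, Subgroup.closure_le]
    intro s hs
    obtain ⟨t, hst⟩ := hfdec s hs
    rw [hst]
    exact mul_mem (Subgroup.mem_sup_left (hA0 (hfA s hs)))
      (Subgroup.mem_sup_right (Subgroup.mem_closure_singleton.mpr ⟨t, rfl⟩))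
  have hMnorm : M ≤ Subgroup.normalizer (P : Set G) := by
    refine sup_le Subgroup.le_normalizer ?_
    rw [← Subgroup.zpowers_eq_closure]
    exact Subgroup.zpowers_le.mpr hxnorm
  haveI hPMnormal : (P.subgroupOf M).Normal := by
    constructor
    intro n hn g
    rw [Subgroup.mem_subgroupOf] at hn ⊢
    exact ((Subgroup.mem_normalizer_iff.mp (hMnorm g.2)) (n : G)).mp hn
  -- quotient M / P is generated by the image of x, hence abelian
  set q := QuotientGroup.mk' (P.subgroupOf M) with hq
  set xM : M := ⟨x, hxM⟩ with hxMdef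
  have hMeq : M = Subgroup.closure ((P : Set G) ∪ {x}) := by
    rw [Subgroup.closure_union, Subgroup.closure_eq]
  have key : ∀ g (hg' : g ∈ Subgroup.closure ((P : Set G) ∪ {x})) (hg : g ∈ M),
      q ⟨g, hg⟩ ∈ Subgroup.zpowers (q xM) := by
    intro g hg'
    induction hg' using Subgroup.closure_induction with
    | mem b hb =>
      intro hgM
      rcases hb with hb | hb
      · have h1 : q ⟨b, hgM⟩ = 1 := by
          rw [hq, QuotientGroup.mk'_apply, QuotientGroup.eq_one_iff]
          rwa [Subgroup.mem_subgroupOf]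
        rw [h1]; exact one_mem _
      · rw [Set.mem_singleton_iff] at hb
        subst hb
        exact Subgroup.mem_zpowers _
    | one =>
      intro hgM
      have h1 : (⟨(1 : G), hgM⟩ : M) = 1 := rfl
      rw [h1, map_one]; exact one_mem _
    | mul a b ha hb iha ihb =>
      intro hgM
      have h1 : (⟨a * b, hgM⟩ : M) = ⟨a, hMeq.ge ha⟩ * ⟨b, hMeq.ge hb⟩ := rfl
      rw [h1, map_mul]
      exact mul_mem (iha _) (ihb _)
    | inv a ha iha =>
      intro hgM
      have h1 : (⟨a⁻¹, hgM⟩ : M) = (⟨a, hMeq.ge ha⟩)⁻¹ := rfl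
      rw [h1, map_inv]
      exact inv_mem (iha _)
  haveI hQsolv : Group.IsSolvable (M ⧸ P.subgroupOf M) := by
    apply isSolvable_of_comm
    intro a b
    obtain ⟨m, rfl⟩ := QuotientGroup.mk'_surjective _ a
    obtain ⟨m', rfl⟩ := QuotientGroup.mk'_surjective _ b
    obtain ⟨s, hs⟩ := key (m : G) (hMeq ▸ m.2) m.2
    obtain ⟨t, ht⟩ := key (m' : G) (hMeq ▸ m'.2) m'.2
    have hs' : q xM ^ s = q m := hs
    have ht' : q xM ^ t = q m' := ht
    show q m * q m' = q m' * q m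
    rw [← hs', ← ht', ← zpow_add, ← zpow_add, add_comm]
  haveI hPMsolv : Group.IsSolvable (P.subgroupOf M) :=
    solvable_of_solvable_injective
      (f := (Subgroup.subgroupOfEquivOfLe hPM).toMonoidHom)
      (Subgroup.subgroupOfEquivOfLe hPM).injective
  haveI hMsolv : Group.IsSolvable M := by
    apply solvable_of_ker_le_range (P.subgroupOf M).subtype q
    rw [hq, QuotientGroup.ker_mk', Subgroup.range_subtype]
  haveI hKMsolv : Group.IsSolvable (K.subgroupOf M) := inferInstance
  exact solvable_of_solvable_injective
    (f := (Subgroup.subgroupOfEquivOfLe hKM).symm.toMonoidHom)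
    (Subgroup.subgroupOfEquivOfLe hKM).symm.injective
end
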